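/- For every integer $n \geq 1$, the group $A = (\mathbb{Z}_3)^n$ satisfies Property D: every sequence $S$ over $A$ of length $|S| = s(A) - 1$ that has no zero-sum subsequence of length $3$ has the form $S = T^{2}$ for some sequence $T$ over $A$. -/

import Mathlib

noncomputable def EGZ (A : Type) [AddCommGroup A] : ℕ :=
  sInf {ℓ : ℕ | ∀ S : Multiset A, ℓ ≤ Multiset.card S →
    ∃ T ≤ S, Multiset.card T = AddMonoid.exponent A ∧ T.sum = 0}

def PropertyD (A : Type) [AddCommGroup A] (k : ℕ) : Prop :=
  ∀ S : Multiset A, Multiset.card S = EGZ A - 1 →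
    (¬ ∃ T ≤ S, Multiset.card T = k ∧ T.sum = 0) →
    ∃ T : Multiset A, S = (k - 1) • T

theorem propD_three (n : ℕ) (hn : 1 ≤ n) : PropertyD (Fin n → ZMod 3) 3 := by
  have hexp : AddMonoid.exponent (Fin n → ZMod 3) = 3 := by
    rw [AddMonoid.exponent_pi]
    simp only [ZMod.exponent]
    refine Nat.dvd_antisymm (Finset.lcm_dvd fun i _ => dvd_rfl) ?_
    exact Finset.dvd_lcm (Finset.mem_univ (⟨0, hn⟩ : Fin n))
  set A := (Fin n → ZMod 3) with hA
  have h3 : ∀ a : A, (3 : ℕ) • a = 0 := by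
    intro a; funext i
    have h : ∀ x : ZMod 3, (3 : ℕ) • x = 0 := by decide
    exact h (a i)
  set P : Multiset A → Prop := fun S => ¬ ∃ T ≤ S, Multiset.card T = 3 ∧ T.sum = 0 with hP
  -- multiplicities are at most 2
  have hcount : ∀ S : Multiset A, P S → ∀ a : A, S.count a ≤ 2 := by
    intro S hS a
    by_contra h
    push_neg at h
    refine hS ⟨Multiset.replicate 3 a, ?_, by simp, by rw [Multiset.sum_replicate]; exact h3 a⟩
    rw [Multiset.le_iff_count]
    intro b
    rcases eq_or_ne b a with rfl | hb
    · have h' : 3 ≤ Multiset.count _ S := h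
      simpa [Multiset.count_replicate] using h'
    · simp [Multiset.count_replicate, hb]
  -- bound on lengths
  have hbound : ∀ S : Multiset A, P S → Multiset.card S ≤ 2 * Fintype.card A := by
    intro S hS
    calc Multiset.card S = ∑ a ∈ S.toFinset, S.count a := (Multiset.toFinset_sum_count_eq S).symm
    _ ≤ ∑ a ∈ S.toFinset, 2 := Finset.sum_le_sum fun a _ => hcount S hS a
    _ = 2 * S.toFinset.card := by rw [Finset.sum_const]; ring
    _ ≤ 2 * Fintype.card A := by
        have := Finset.card_le_univ S.toFinset
        omega
  set K : Set ℕ := {k | ∃ S : Multiset A, P S ∧ Multiset.card S = k} with hK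
  have hK0 : (0 : ℕ) ∈ K := by
    refine ⟨0, ?_, by simp⟩
    rintro ⟨T, hT, hTc, -⟩
    rw [Multiset.le_zero] at hT
    simp [hT] at hTc
  have hKbdd : BddAbove K := by
    refine ⟨2 * Fintype.card A, ?_⟩
    rintro k ⟨S, hS, rfl⟩
    exact hbound S hS
  set m := sSup K with hm
  obtain ⟨S₀, hS₀, hS₀c⟩ : m ∈ K := Nat.sSup_mem ⟨0, hK0⟩ hKbdd
  have hle : ∀ k ∈ K, k ≤ m := fun k hk => le_csSup hKbdd hk
  -- EGZ A = m + 1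
  have hEGZ : EGZ A = m + 1 := by
    have hmem : (m + 1) ∈ {ℓ : ℕ | ∀ S : Multiset A, ℓ ≤ Multiset.card S →
        ∃ T ≤ S, Multiset.card T = AddMonoid.exponent A ∧ T.sum = 0} := by
      intro S hSc
      rw [hexp]
      by_contra h
      have : Multiset.card S ∈ K := ⟨S, h, rfl⟩
      have := hle _ this
      omega
    refine le_antisymm (Nat.sInf_le hmem) (le_csInf ⟨_, hmem⟩ ?_)
    intro ℓ hℓ
    by_contra h
    push_neg at h
    obtain ⟨T, hTle, hTc, hTs⟩ := hℓ S₀ (by omega)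
    exact hS₀ ⟨T, hTle, by rw [← hexp]; exact hTc, hTs⟩
  -- main argument
  intro S hcard hno
  rw [hEGZ] at hcard
  simp only [Nat.add_sub_cancel] at hcard
  have hno' : P S := hno
  -- every count is 0 or 2
  have hc2 : ∀ a : A, a ∈ S → S.count a = 2 := by
    intro a ha
    have h1 : 1 ≤ S.count a := Multiset.one_le_count_iff_mem.mpr ha
    have h2 : S.count a ≤ 2 := hcount S hno' a
    by_contra hne
    have hca : S.count a = 1 := by omega
    -- extend S by another copy of a
    have hnotP : ¬ P (a ::ₘ S) := by
      intro hPS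
      have : Multiset.card (a ::ₘ S) ∈ K := ⟨_, hPS, rfl⟩
      have := hle _ this
      simp [hcard] at this
    rw [hP] at hnotP
    push_neg at hnotP
    obtain ⟨T, hTle, hTc, hTs⟩ := hnotP
    have hTa : T.count a ≤ 2 := by
      have := Multiset.count_le_of_le a hTle
      simpa [Multiset.count_cons_self, hca] using this
    have hTa2 : T.count a = 2 := by
      by_contra h
      refine hno ⟨T, ?_, hTc, hTs⟩
      rw [Multiset.le_iff_count]
      intro b
      rcases eq_or_ne b a with rfl | hb
      · omega
      · have := Multiset.count_le_of_le b hTle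
        simpa [Multiset.count_cons_of_ne hb] using this
    -- T = {a, a, b} with 2a + b = 0, so b = a, contradiction
    have hrep : Multiset.replicate 2 a ≤ T := by
      rw [Multiset.le_iff_count]
      intro b
      rcases eq_or_ne b a with rfl | hb
      · simp [Multiset.count_replicate, hTa2]
      · simp [Multiset.count_replicate, hb]
    obtain ⟨U, rfl⟩ := Multiset.le_iff_exists_add.mp hrep
    have hUc : Multiset.card U = 1 := by
      have := hTc
      simp at this
      omega
    obtain ⟨b, rfl⟩ := Multiset.card_eq_one.mp hUc
    have hsum : a + a + b = 0 := by
      simpa [Multiset.sum_replicate, two_nsmul, add_assoc] using hTs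
    have hba : b = a := by
      have h3a := h3 a
      have : (3 : ℕ) • a = a + a + a := by
        change (2 + 1 : ℕ) • a = _
        rw [succ_nsmul, two_nsmul]
      rw [this] at h3a
      have : a + a + b = a + a + a := by rw [hsum, h3a]
      exact add_left_cancel this
    rw [hba] at hTa2
    simp [Multiset.count_replicate] at hTa2
  -- conclude S = 2 • toFinset.val
  refine ⟨S.toFinset.val, ?_⟩
  ext a
  rw [Multiset.count_nsmul]
  rcases Decidable.em (a ∈ S) with h | h
  · rw [hc2 a h]
    have : S.toFinset.val.count a = 1 := by
      rw [Multiset.count_eq_one_of_mem S.toFinset.nodup (by simpa using h)]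
    rw [this]
  · rw [Multiset.count_eq_zero_of_notMem h, Multiset.count_eq_zero_of_notMem (by simpa using h)]
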